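/- Let 𝒳 ⊂ ℝ^d be compact with diameter D, let μ be a probability measure on 𝒳, and for x ∈ 𝒳 let F_x(t) = μ({z : ‖z − x‖² ≤ t}) with quantile function F_x^{-1}. Fix m ∈ (0,1] and define Ψ(x₁, x₂) = min(‖x₁ − x₂‖², F_{x₂}^{-1}(m)) − E_{Z}[min(‖Z − x₂‖², F_{x₂}^{-1}(m))] where Z ∼ μ. Then there exists a constant C < ∞, depending only on 𝒳, such that |Ψ(x₁, z₁) − Ψ(x₁, z₂)| ≤ C‖z₁ − z₂‖ for all x₁, z₁, z₂ ∈ 𝒳. -/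

import Mathlib

open MeasureTheory

set_option maxHeartbeats 1000000 in
theorem stmt_10 {d : ℕ} (𝒳 : Set (EuclideanSpace ℝ (Fin d))) (h𝒳 : IsCompact 𝒳)
    (μ : Measure (EuclideanSpace ℝ (Fin d))) [IsProbabilityMeasure μ]
    (hsupp : μ 𝒳 = 1) (m : ℝ) (hm0 : 0 < m) (hm1 : m ≤ 1)
    (F : EuclideanSpace ℝ (Fin d) → ℝ → ℝ)
    (hF : ∀ x t, F x t = (μ {z | ‖z - x‖ ^ 2 ≤ t}).toReal)
    (Finv : EuclideanSpace ℝ (Fin d) → ℝ → ℝ)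
    (hFinv : ∀ x u, Finv x u = sInf {t : ℝ | u ≤ F x t})
    (Ψ : EuclideanSpace ℝ (Fin d) → EuclideanSpace ℝ (Fin d) → ℝ)
    (hΨ : ∀ x₁ x₂, Ψ x₁ x₂ =
      min (‖x₁ - x₂‖ ^ 2) (Finv x₂ m) - ∫ z, min (‖z - x₂‖ ^ 2) (Finv x₂ m) ∂μ) :
    ∃ C : ℝ, 0 ≤ C ∧
      ∀ x₁ ∈ 𝒳, ∀ z₁ ∈ 𝒳, ∀ z₂ ∈ 𝒳,
        |Ψ x₁ z₁ - Ψ x₁ z₂| ≤ C * ‖z₁ - z₂‖ := by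
  set D := Metric.diam 𝒳 with hD
  have hD0 : 0 ≤ D := Metric.diam_nonneg
  have hdist : ∀ a ∈ 𝒳, ∀ b ∈ 𝒳, ‖a - b‖ ≤ D := by
    intro a ha b hb
    rw [← dist_eq_norm]
    exact Metric.dist_le_diam_of_mem h𝒳.isBounded ha hb
  -- monotonicity of F in t
  have hFmono : ∀ z s t, s ≤ t → F z s ≤ F z t := by
    intro z s t hst
    rw [hF, hF]
    exact ENNReal.toReal_mono (measure_ne_top μ _)
      (measure_mono fun w hw => le_trans hw hst)
  -- elements of {t | m ≤ F z t} are nonnegative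
  have hS0 : ∀ z t, m ≤ F z t → 0 ≤ t := by
    intro z t ht
    by_contra h
    push_neg at h
    have hempty : {w : EuclideanSpace ℝ (Fin d) | ‖w - z‖ ^ 2 ≤ t} = ∅ := by
      ext w
      simp only [Set.mem_setOf_eq, Set.mem_empty_iff_false, iff_false, not_le]
      exact lt_of_lt_of_le h (sq_nonneg _)
    rw [hF, hempty] at ht
    simp at ht
    linarith
  -- D^2 is in the set
  have hSD : ∀ z ∈ 𝒳, m ≤ F z (D ^ 2) := by
    intro z hz
    have hsub : 𝒳 ⊆ {w : EuclideanSpace ℝ (Fin d) | ‖w - z‖ ^ 2 ≤ D ^ 2} := by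
      intro w hw
      have h1 : ‖w - z‖ ≤ D := hdist w hw z hz
      exact pow_le_pow_left₀ (norm_nonneg _) h1 2
    have h1 : μ {w : EuclideanSpace ℝ (Fin d) | ‖w - z‖ ^ 2 ≤ D ^ 2} = 1 :=
      le_antisymm prob_le_one (hsupp ▸ measure_mono hsub)
    rw [hF, h1]
    simpa using hm1
  have hSne : ∀ z ∈ 𝒳, Set.Nonempty {t : ℝ | m ≤ F z t} := fun z hz => ⟨D ^ 2, hSD z hz⟩
  have hbdd : ∀ z, BddBelow {t : ℝ | m ≤ F z t} := fun z => ⟨0, fun t ht => hS0 z t ht⟩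
  have hq0 : ∀ z ∈ 𝒳, 0 ≤ Finv z m := by
    intro z hz
    rw [hFinv]
    exact le_csInf (hSne z hz) fun t ht => hS0 z t ht
  have hqD : ∀ z ∈ 𝒳, Finv z m ≤ D ^ 2 := by
    intro z hz
    rw [hFinv]
    exact csInf_le (hbdd z) (hSD z hz)
  -- key inclusion lemma
  have hkey : ∀ (a b : EuclideanSpace ℝ (Fin d)) (t : ℝ), 0 ≤ t → m ≤ F a t →
      m ≤ F b ((Real.sqrt t + ‖a - b‖) ^ 2) := by
    intro a b t ht0 ht
    refine le_trans ht ?_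
    rw [hF, hF]
    refine ENNReal.toReal_mono (measure_ne_top μ _) (measure_mono ?_)
    intro w hw
    simp only [Set.mem_setOf_eq] at hw ⊢
    have h1 : ‖w - a‖ ≤ Real.sqrt t := by
      rw [show Real.sqrt t = Real.sqrt t from rfl]
      exact (Real.le_sqrt (norm_nonneg _) ht0).mpr hw
    have h2 : ‖w - b‖ ≤ ‖w - a‖ + ‖a - b‖ := by
      have := norm_add_le (w - a) (a - b)
      simpa [sub_add_sub_cancel] using this
    have h3 : ‖w - b‖ ≤ Real.sqrt t + ‖a - b‖ := by linarith
    exact pow_le_pow_left₀ (norm_nonneg _) h3 2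
  -- quantile Lipschitz (one direction)
  have hlip : ∀ a ∈ 𝒳, ∀ b ∈ 𝒳, Finv b m ≤ Finv a m + 3 * D * ‖a - b‖ := by
    intro a ha b hb
    set q := Finv a m with hq
    set δ := ‖a - b‖ with hδ
    have hδ0 : 0 ≤ δ := norm_nonneg _
    have hq0' : 0 ≤ q := hq0 a ha
    have hsq0 : 0 ≤ Real.sqrt q := Real.sqrt_nonneg _
    have main : Finv b m ≤ (Real.sqrt q + δ) ^ 2 := by
      refine le_of_forall_pos_le_add ?_
      intro ε' hε'
      set K := 2 * (Real.sqrt q + δ) + 1 with hK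
      have hK0 : 0 < K := by positivity
      set η := min (ε' / K) 1 with hη
      have hη0 : 0 < η := lt_min (by positivity) one_pos
      have hη1 : η ≤ 1 := min_le_right _ _
      have hKη : K * η ≤ ε' := by
        have : η ≤ ε' / K := min_le_left _ _
        calc K * η ≤ K * (ε' / K) := by nlinarith
        _ = ε' := by field_simp
      obtain ⟨t, ht, htlt⟩ := Real.lt_sInf_add_pos (hSne a ha) (show (0:ℝ) < η ^ 2 by positivity)
      have ht' : m ≤ F a t := ht
      have ht0 : 0 ≤ t := hS0 a t ht'
      have h1 : Finv b m ≤ (Real.sqrt t + δ) ^ 2 := by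
        rw [hFinv]
        exact csInf_le (hbdd b) (hkey a b t ht0 ht')
      have htq : t < q + η ^ 2 := by rw [hq, hFinv]; exact htlt
      have h2 : Real.sqrt t ≤ Real.sqrt q + η := by
        have : t ≤ (Real.sqrt q + η) ^ 2 := by
          have hsq : Real.sqrt q ^ 2 = q := Real.sq_sqrt hq0'
          nlinarith
        calc Real.sqrt t ≤ Real.sqrt ((Real.sqrt q + η) ^ 2) := Real.sqrt_le_sqrt this
        _ = Real.sqrt q + η := Real.sqrt_sq (by positivity)
      have hstep : (Real.sqrt t + δ) ^ 2 ≤ (Real.sqrt q + η + δ) ^ 2 := by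
        nlinarith [Real.sqrt_nonneg t]
      have hηη : η * η ≤ η := mul_le_of_le_one_right hη0.le hη1
      calc Finv b m ≤ (Real.sqrt t + δ) ^ 2 := h1
      _ ≤ (Real.sqrt q + δ) ^ 2 + ε' := by nlinarith [hstep, hKη, hηη, hsq0, hδ0, hη0.le]
    have hsqD : Real.sqrt q ≤ D := by
      calc Real.sqrt q ≤ Real.sqrt (D ^ 2) := Real.sqrt_le_sqrt (hqD a ha)
      _ = D := Real.sqrt_sq hD0
    have hδD : δ ≤ D := hdist a ha b hb
    have hsq : Real.sqrt q ^ 2 = q := Real.sq_sqrt hq0'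
    nlinarith [main]
  -- introduce the points
  refine ⟨10 * D, by positivity, ?_⟩
  intro x₁ hx₁ z₁ hz₁ z₂ hz₂
  set δ := ‖z₁ - z₂‖ with hδdef
  have hδ0 : 0 ≤ δ := norm_nonneg _
  set q₁ := Finv z₁ m with hq₁
  set q₂ := Finv z₂ m with hq₂
  have habs_q : |q₁ - q₂| ≤ 3 * D * δ := by
    rw [abs_sub_le_iff]
    constructor
    · have := hlip z₂ hz₂ z₁ hz₁
      rw [norm_sub_rev] at this
      linarith
    · have := hlip z₁ hz₁ z₂ hz₂
      linarith
  -- pointwise bound on squared norms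
  have hsqdiff : ∀ w ∈ 𝒳, |‖w - z₁‖ ^ 2 - ‖w - z₂‖ ^ 2| ≤ 2 * D * δ := by
    intro w hw
    have h1 : |‖w - z₁‖ - ‖w - z₂‖| ≤ δ := by
      have h := abs_norm_sub_norm_le (w - z₁) (w - z₂)
      have he : ‖(w - z₁) - (w - z₂)‖ = δ := by
        rw [show (w - z₁) - (w - z₂) = z₂ - z₁ by abel, norm_sub_rev]
      rw [he] at h
      exact h
    have h2 : ‖w - z₁‖ ≤ D := hdist w hw z₁ hz₁
    have h3 : ‖w - z₂‖ ≤ D := hdist w hw z₂ hz₂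
    have h4 : 0 ≤ ‖w - z₁‖ := norm_nonneg _
    have h5 : 0 ≤ ‖w - z₂‖ := norm_nonneg _
    rw [abs_le] at h1 ⊢
    constructor <;> nlinarith [h1.1, h1.2]
  -- min difference bound
  have hmin : ∀ a b c e : ℝ, |min a b - min c e| ≤ |a - c| + |b - e| := by
    intro a b c e
    refine (abs_min_sub_min_le_max a b c e).trans (max_le ?_ ?_)
    · exact le_add_of_nonneg_right (abs_nonneg _)
    · exact le_add_of_nonneg_left (abs_nonneg _)
  have hq₁0 : 0 ≤ q₁ := hq0 z₁ hz₁
  have hq₂0 : 0 ≤ q₂ := hq0 z₂ hz₂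
  -- integrability
  have hint : ∀ (c : EuclideanSpace ℝ (Fin d)) (q : ℝ), 0 ≤ q →
      Integrable (fun z => min (‖z - c‖ ^ 2) q) μ := by
    intro c q hq
    refine Integrable.mono' (integrable_const q) ?_ ?_
    · exact (Continuous.min (((continuous_id.sub continuous_const).norm).pow 2)
        continuous_const).aestronglyMeasurable
    · refine Filter.Eventually.of_forall fun w => ?_
      rw [Real.norm_eq_abs, abs_le]
      exact ⟨le_trans (by linarith) (le_min (sq_nonneg _) hq), min_le_right _ _⟩
  have hI1 := hint z₁ q₁ hq₁0
  have hI2 := hint z₂ q₂ hq₂0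
  -- a.e. membership in 𝒳
  have hae : ∀ᵐ w ∂μ, w ∈ 𝒳 := by
    have h𝒳m : MeasurableSet 𝒳 := h𝒳.isClosed.measurableSet
    rw [ae_iff]
    have : μ 𝒳ᶜ = 0 := by
      rw [measure_compl h𝒳m (measure_ne_top μ _), hsupp, measure_univ, tsub_self]
    exact this
  -- bound the integral difference
  have hIbound : |(∫ z, min (‖z - z₁‖ ^ 2) q₁ ∂μ) - ∫ z, min (‖z - z₂‖ ^ 2) q₂ ∂μ| ≤
      5 * D * δ := by
    rw [← integral_sub hI1 hI2]
    have hnorm : |∫ z, (min (‖z - z₁‖ ^ 2) q₁ - min (‖z - z₂‖ ^ 2) q₂) ∂μ| ≤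
        ∫ z, |min (‖z - z₁‖ ^ 2) q₁ - min (‖z - z₂‖ ^ 2) q₂| ∂μ := by
      simpa [Real.norm_eq_abs] using
        norm_integral_le_integral_norm (μ := μ)
          (f := fun z => min (‖z - z₁‖ ^ 2) q₁ - min (‖z - z₂‖ ^ 2) q₂)
    refine hnorm.trans ?_
    have hle : ∫ z, |min (‖z - z₁‖ ^ 2) q₁ - min (‖z - z₂‖ ^ 2) q₂| ∂μ ≤
        ∫ _z, 5 * D * δ ∂μ := by
      refine integral_mono_ae ((hI1.sub hI2).abs) (integrable_const _) ?_
      filter_upwards [hae] with w hw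
      calc |min (‖w - z₁‖ ^ 2) q₁ - min (‖w - z₂‖ ^ 2) q₂| ≤
          |‖w - z₁‖ ^ 2 - ‖w - z₂‖ ^ 2| + |q₁ - q₂| := hmin _ _ _ _
      _ ≤ 2 * D * δ + 3 * D * δ := add_le_add (hsqdiff w hw) habs_q
      _ = 5 * D * δ := by ring
    refine hle.trans ?_
    simp [integral_const]
  -- bound the first min difference
  have hminA : |min (‖x₁ - z₁‖ ^ 2) q₁ - min (‖x₁ - z₂‖ ^ 2) q₂| ≤ 5 * D * δ := by
    calc |min (‖x₁ - z₁‖ ^ 2) q₁ - min (‖x₁ - z₂‖ ^ 2) q₂| ≤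
        |‖x₁ - z₁‖ ^ 2 - ‖x₁ - z₂‖ ^ 2| + |q₁ - q₂| := hmin _ _ _ _
    _ ≤ 2 * D * δ + 3 * D * δ := add_le_add (hsqdiff x₁ hx₁) habs_q
    _ = 5 * D * δ := by ring
  rw [hΨ, hΨ]
  have := abs_sub (min (‖x₁ - z₁‖ ^ 2) q₁ - ∫ z, min (‖z - z₁‖ ^ 2) q₁ ∂μ)
    (min (‖x₁ - z₂‖ ^ 2) q₂ - ∫ z, min (‖z - z₂‖ ^ 2) q₂ ∂μ)
  calc |(min (‖x₁ - z₁‖ ^ 2) q₁ - ∫ z, min (‖z - z₁‖ ^ 2) q₁ ∂μ) -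
        (min (‖x₁ - z₂‖ ^ 2) q₂ - ∫ z, min (‖z - z₂‖ ^ 2) q₂ ∂μ)| =
      |(min (‖x₁ - z₁‖ ^ 2) q₁ - min (‖x₁ - z₂‖ ^ 2) q₂) -
        ((∫ z, min (‖z - z₁‖ ^ 2) q₁ ∂μ) - ∫ z, min (‖z - z₂‖ ^ 2) q₂ ∂μ)| := by
        ring_nf
  _ ≤ |min (‖x₁ - z₁‖ ^ 2) q₁ - min (‖x₁ - z₂‖ ^ 2) q₂| +
      |(∫ z, min (‖z - z₁‖ ^ 2) q₁ ∂μ) - ∫ z, min (‖z - z₂‖ ^ 2) q₂ ∂μ| := abs_sub _ _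
  _ ≤ 5 * D * δ + 5 * D * δ := add_le_add hminA hIbound
  _ = 10 * D * δ := by ring
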